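/- Under the same hypotheses with κ₁, κ₂ of class C², for x ∈ C[0,1] the function Kx is twice differentiable and (Kx)''(s) = (∂κ₁/∂s(s,s) − ∂κ₂/∂s(s,s)) x(s) + ∫₀ˢ (∂²κ₁/∂s²)(s,t) x(t) dt + ∫ₛ¹ (∂²κ₂/∂s²)(s,t) x(t) dt. -/

import Mathlib

open intervalIntegral

section GreenAuxSection
open Set MeasureTheory Filter Topology Interval

namespace GreenAux


lemma ii_of_contOn {h : ℝ → ℝ} (hc : ContinuousOn h (Icc 0 1))
    {a b : ℝ} (ha : a ∈ Icc (0:ℝ) 1) (hb : b ∈ Icc (0:ℝ) 1) :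
    IntervalIntegrable h volume a b :=
  (hc.mono (uIcc_subset_Icc ha hb)).intervalIntegrable

lemma slice1 {f : ℝ → ℝ → ℝ}
    (hf : ContinuousOn (fun p : ℝ × ℝ => f p.1 p.2) (Icc 0 1 ×ˢ Icc 0 1))
    {t : ℝ} (ht : t ∈ Icc (0:ℝ) 1) : ContinuousOn (fun r => f r t) (Icc 0 1) :=
  hf.comp ((continuous_id.prodMk continuous_const).continuousOn)
    (fun r hr => Set.mk_mem_prod hr ht)

lemma slice2 {f : ℝ → ℝ → ℝ}
    (hf : ContinuousOn (fun p : ℝ × ℝ => f p.1 p.2) (Icc 0 1 ×ˢ Icc 0 1))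
    {s : ℝ} (hs : s ∈ Icc (0:ℝ) 1) : ContinuousOn (fun t => f s t) (Icc 0 1) :=
  hf.comp ((continuous_const.prodMk continuous_id).continuousOn)
    (fun t ht => Set.mk_mem_prod hs ht)

lemma ftc2 {f g : ℝ → ℝ → ℝ}
    (hf : ContinuousOn (fun p : ℝ × ℝ => f p.1 p.2) (Icc 0 1 ×ˢ Icc 0 1))
    (hg : ContinuousOn (fun p : ℝ × ℝ => g p.1 p.2) (Icc 0 1 ×ˢ Icc 0 1))
    (hd : ∀ u ∈ Icc (0:ℝ) 1, ∀ t ∈ Icc (0:ℝ) 1,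
      HasDerivWithinAt (fun r => f r t) (g u t) (Icc 0 1) u)
    {a b t : ℝ} (ha : a ∈ Icc (0:ℝ) 1) (hb : b ∈ Icc (0:ℝ) 1) (ht : t ∈ Icc (0:ℝ) 1) :
    ∫ r in a..b, g r t = f b t - f a t := by
  apply integral_eq_sub_of_hasDeriv_right
  · exact (slice1 hf ht).mono (uIcc_subset_Icc ha hb)
  · intro r hr
    have hr01 : r ∈ Ioo (0:ℝ) 1 :=
      ⟨lt_of_le_of_lt (le_min ha.1 hb.1) hr.1, lt_of_lt_of_le hr.2 (max_le ha.2 hb.2)⟩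
    exact ((hd r (Ioo_subset_Icc_self hr01) t ht).hasDerivAt
      (Icc_mem_nhds hr01.1 hr01.2)).hasDerivWithinAt
  · exact ii_of_contOn (slice1 hg ht) ha hb

lemma exists_bound {x : ℝ → ℝ} (hx : ContinuousOn x (Icc 0 1)) :
    ∃ M : ℝ, 0 < M ∧ ∀ t ∈ Icc (0:ℝ) 1, |x t| ≤ M := by
  obtain ⟨C, hC⟩ := isCompact_Icc.exists_bound_of_continuousOn hx
  exact ⟨max C 1, lt_of_lt_of_le zero_lt_one (le_max_right _ _),
    fun t ht => le_trans (by simpa using hC t ht) (le_max_left _ _)⟩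

lemma unif {f : ℝ → ℝ → ℝ}
    (hf : ContinuousOn (fun p : ℝ × ℝ => f p.1 p.2) (Icc 0 1 ×ˢ Icc 0 1)) {ε : ℝ}
    (hε : 0 < ε) : ∃ δ > 0, ∀ u ∈ Icc (0:ℝ) 1, ∀ s ∈ Icc (0:ℝ) 1, ∀ t ∈ Icc (0:ℝ) 1,
      |u - s| < δ → |f u t - f s t| < ε := by
  have hQ : IsCompact (Icc (0:ℝ) 1 ×ˢ Icc (0:ℝ) 1) := isCompact_Icc.prod isCompact_Icc
  have huc := hQ.uniformContinuousOn_of_continuous hf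
  rw [Metric.uniformContinuousOn_iff] at huc
  obtain ⟨δ, hδ, H⟩ := huc ε hε
  refine ⟨δ, hδ, fun u hu s hs t ht h => ?_⟩
  have := H (u, t) (Set.mk_mem_prod hu ht) (s, t) (Set.mk_mem_prod hs ht)
    (by rw [Prod.dist_eq, dist_self]; exact max_lt (by rwa [Real.dist_eq]) hδ)
  rwa [Real.dist_eq] at this

lemma abs_le_of_uIoc {s u r : ℝ} (hr : r ∈ Ι s u) : |r - s| ≤ |u - s| := by
  rcases le_total s u with h | h
  · rw [uIoc_of_le h] at hr
    rw [abs_of_nonneg (by linarith [hr.1.le]), abs_of_nonneg (by linarith)]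
    linarith [hr.2]
  · rw [uIoc_of_ge h] at hr
    rw [abs_of_nonpos (by linarith [hr.2]), abs_of_nonpos (by linarith)]
    linarith [hr.1.le]

lemma uIoc_mem {s u : ℝ} (hs : s ∈ Icc (0:ℝ) 1) (hu : u ∈ Icc (0:ℝ) 1) :
    Ι s u ⊆ Icc (0:ℝ) 1 := uIoc_subset_uIcc.trans (uIcc_subset_Icc hs hu)


lemma hasDeriv_endpoint {h : ℝ → ℝ} (hc : ContinuousOn h (Icc 0 1)) {s : ℝ}
    (hs : s ∈ Icc (0:ℝ) 1) :
    HasDerivWithinAt (fun u => ∫ t in (0:ℝ)..u, h t) (h s) (Icc 0 1) s := by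
  haveI : Fact (s ∈ Icc (0:ℝ) 1) := ⟨hs⟩
  exact intervalIntegral.integral_hasDerivWithinAt_right
    (ii_of_contOn hc ⟨le_refl 0, zero_le_one⟩ hs)
    (hc.stronglyMeasurableAtFilter_nhdsWithin measurableSet_Icc s)
    (hc s hs)

lemma hasDeriv_paramC {f g : ℝ → ℝ → ℝ} {x : ℝ → ℝ}
    (hf : ContinuousOn (fun p : ℝ × ℝ => f p.1 p.2) (Icc 0 1 ×ˢ Icc 0 1))
    (hg : ContinuousOn (fun p : ℝ × ℝ => g p.1 p.2) (Icc 0 1 ×ˢ Icc 0 1))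
    (hd : ∀ u ∈ Icc (0:ℝ) 1, ∀ t ∈ Icc (0:ℝ) 1,
      HasDerivWithinAt (fun r => f r t) (g u t) (Icc 0 1) u)
    (hx : ContinuousOn x (Icc 0 1))
    {s b : ℝ} (hs : s ∈ Icc (0:ℝ) 1) (hb : b ∈ Icc (0:ℝ) 1) :
    HasDerivWithinAt (fun u => ∫ t in (0:ℝ)..b, (f u t - f s t) * x t)
      (∫ t in (0:ℝ)..b, g s t * x t) (Icc 0 1) s := by
  have h0 : (0:ℝ) ∈ Icc (0:ℝ) 1 := ⟨le_refl 0, zero_le_one⟩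
  obtain ⟨M, hM0, hM⟩ := exists_bound hx
  rw [hasDerivWithinAt_iff_isLittleO, Asymptotics.isLittleO_iff]
  intro c hc
  obtain ⟨δ, hδ, Hδ⟩ := unif hg (ε := c / M) (by positivity)
  have h1 : ∀ᶠ u in 𝓝 s, dist u s < δ := by
    filter_upwards [Metric.ball_mem_nhds s hδ] with u hu using hu
  filter_upwards [self_mem_nhdsWithin, h1.filter_mono nhdsWithin_le_nhds] with u hu hud
  have hint1 : IntervalIntegrable (fun t => (f u t - f s t) * x t) volume 0 b :=
    ii_of_contOn (((slice2 hf hu).sub (slice2 hf hs)).mul hx) h0 hb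
  have hintg : IntervalIntegrable (fun t => (u - s) * (g s t * x t)) volume 0 b :=
    (ii_of_contOn ((slice2 hg hs).mul hx) h0 hb).const_mul _
  have key : (∫ t in (0:ℝ)..b, (f u t - f s t) * x t)
        - (u - s) * ∫ t in (0:ℝ)..b, g s t * x t
      = ∫ t in (0:ℝ)..b, ((f u t - f s t) - (u - s) * g s t) * x t := by
    rw [← intervalIntegral.integral_const_mul, ← intervalIntegral.integral_sub hint1 hintg]
    exact intervalIntegral.integral_congr fun t _ => by ring
  have hbd : ∀ t ∈ Ι (0:ℝ) b, ‖((f u t - f s t) - (u - s) * g s t) * x t‖ ≤ c * |u - s| := by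
    intro t htb
    have ht : t ∈ Icc (0:ℝ) 1 := uIoc_mem h0 hb htb
    have hft : f u t - f s t = ∫ r in s..u, g r t := by
      rw [ftc2 hf hg hd hs hu ht]
    have hconst : (u - s) * g s t = ∫ _r in s..u, g s t := by
      simp [intervalIntegral.integral_const, smul_eq_mul]
    have hsub : (f u t - f s t) - (u - s) * g s t = ∫ r in s..u, (g r t - g s t) := by
      rw [hft, hconst, intervalIntegral.integral_sub (ii_of_contOn (slice1 hg ht) hs hu)
        intervalIntegrable_const]
    have hb2 : ∀ r ∈ Ι s u, ‖g r t - g s t‖ ≤ c / M := by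
      intro r hr
      have hr01 : r ∈ Icc (0:ℝ) 1 := uIoc_mem hs hu hr
      have hlt : |r - s| < δ := lt_of_le_of_lt (abs_le_of_uIoc hr)
        (by rwa [Real.dist_eq] at hud)
      exact (Hδ r hr01 s hs t ht hlt).le
    have hAle : |(f u t - f s t) - (u - s) * g s t| ≤ (c / M) * |u - s| := by
      rw [hsub, ← Real.norm_eq_abs]
      exact intervalIntegral.norm_integral_le_of_norm_le_const hb2
    calc ‖((f u t - f s t) - (u - s) * g s t) * x t‖
        = |(f u t - f s t) - (u - s) * g s t| * |x t| := by
          rw [Real.norm_eq_abs, abs_mul]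
      _ ≤ ((c / M) * |u - s|) * M :=
          mul_le_mul hAle (hM t ht) (abs_nonneg _) (by positivity)
      _ = c * |u - s| := by field_simp
  have hz : (∫ t in (0:ℝ)..b, (f s t - f s t) * x t) = 0 := by simp
  rw [hz, sub_zero, smul_eq_mul, key, Real.norm_eq_abs (u - s)]
  calc ‖∫ t in (0:ℝ)..b, ((f u t - f s t) - (u - s) * g s t) * x t‖
      ≤ (c * |u - s|) * |b - 0| := intervalIntegral.norm_integral_le_of_norm_le_const hbd
    _ ≤ c * |u - s| := by
        rw [sub_zero]
        exact mul_le_of_le_one_right (by positivity)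
          (by rw [abs_of_nonneg hb.1]; exact hb.2)

lemma hasDeriv_movD {f : ℝ → ℝ → ℝ} {x : ℝ → ℝ}
    (hf : ContinuousOn (fun p : ℝ × ℝ => f p.1 p.2) (Icc 0 1 ×ˢ Icc 0 1))
    (hx : ContinuousOn x (Icc 0 1))
    {s : ℝ} (hs : s ∈ Icc (0:ℝ) 1) :
    HasDerivWithinAt (fun u => ∫ t in s..u, (f u t - f s t) * x t) 0 (Icc 0 1) s := by
  obtain ⟨M, hM0, hM⟩ := exists_bound hx
  rw [hasDerivWithinAt_iff_isLittleO, Asymptotics.isLittleO_iff]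
  intro c hc
  obtain ⟨δ, hδ, Hδ⟩ := unif hf (ε := c / M) (by positivity)
  have h1 : ∀ᶠ u in 𝓝 s, dist u s < δ := by
    filter_upwards [Metric.ball_mem_nhds s hδ] with u hu using hu
  filter_upwards [self_mem_nhdsWithin, h1.filter_mono nhdsWithin_le_nhds] with u hu hud
  have hz : (∫ t in s..s, (f s t - f s t) * x t) = 0 := by simp
  rw [hz, sub_zero, smul_zero, sub_zero, Real.norm_eq_abs (u - s)]
  have hbd : ∀ t ∈ Ι s u, ‖(f u t - f s t) * x t‖ ≤ c := by
    intro t htb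
    have ht : t ∈ Icc (0:ℝ) 1 := uIoc_mem hs hu htb
    have hlt : |u - s| < δ := by rwa [Real.dist_eq] at hud
    calc ‖(f u t - f s t) * x t‖ = |f u t - f s t| * |x t| := by
          rw [Real.norm_eq_abs, abs_mul]
      _ ≤ (c / M) * M :=
          mul_le_mul (Hδ u hu s hs t ht hlt).le (hM t ht) (abs_nonneg _) (by positivity)
      _ = c := by field_simp
  calc ‖∫ t in s..u, (f u t - f s t) * x t‖
      ≤ c * |u - s| := intervalIntegral.norm_integral_le_of_norm_le_const hbd
    _ = c * |u - s| := rfl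

lemma key_left {f g : ℝ → ℝ → ℝ} {x : ℝ → ℝ}
    (hf : ContinuousOn (fun p : ℝ × ℝ => f p.1 p.2) (Icc 0 1 ×ˢ Icc 0 1))
    (hg : ContinuousOn (fun p : ℝ × ℝ => g p.1 p.2) (Icc 0 1 ×ˢ Icc 0 1))
    (hd : ∀ u ∈ Icc (0:ℝ) 1, ∀ t ∈ Icc (0:ℝ) 1,
      HasDerivWithinAt (fun r => f r t) (g u t) (Icc 0 1) u)
    (hx : ContinuousOn x (Icc 0 1))
    {s : ℝ} (hs : s ∈ Icc (0:ℝ) 1) :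
    HasDerivWithinAt (fun u => ∫ t in (0:ℝ)..u, f u t * x t)
      (f s s * x s + ∫ t in (0:ℝ)..s, g s t * x t) (Icc 0 1) s := by
  have h0 : (0:ℝ) ∈ Icc (0:ℝ) 1 := ⟨le_refl 0, zero_le_one⟩
  have hA : HasDerivWithinAt (fun u => ∫ t in (0:ℝ)..u, f s t * x t) (f s s * x s)
      (Icc 0 1) s := hasDeriv_endpoint ((slice2 hf hs).mul hx) hs
  have hC := hasDeriv_paramC hf hg hd hx hs hs
  have hD := hasDeriv_movD hf hx hs
  have hsum := (hA.add hC).add hD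
  have heq : ∀ u ∈ Icc (0:ℝ) 1,
      ((∫ t in (0:ℝ)..u, f s t * x t) + ∫ t in (0:ℝ)..s, (f u t - f s t) * x t)
        + ∫ t in s..u, (f u t - f s t) * x t = ∫ t in (0:ℝ)..u, f u t * x t := by
    intro u hu
    have csub : ContinuousOn (fun t => (f u t - f s t) * x t) (Icc 0 1) :=
      ((slice2 hf hu).sub (slice2 hf hs)).mul hx
    rw [add_assoc, intervalIntegral.integral_add_adjacent_intervals
        (ii_of_contOn csub h0 hs) (ii_of_contOn csub hs hu),
      ← intervalIntegral.integral_add (ii_of_contOn (h := fun t => f s t * x t) ((slice2 hf hs).mul hx) h0 hu)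
        (ii_of_contOn csub h0 hu)]
    exact intervalIntegral.integral_congr fun t _ => by ring
  have := hsum.congr (fun u hu => (heq u hu).symm) ((heq s hs).symm)
  simpa using this

lemma key_right {f g : ℝ → ℝ → ℝ} {x : ℝ → ℝ}
    (hf : ContinuousOn (fun p : ℝ × ℝ => f p.1 p.2) (Icc 0 1 ×ˢ Icc 0 1))
    (hg : ContinuousOn (fun p : ℝ × ℝ => g p.1 p.2) (Icc 0 1 ×ˢ Icc 0 1))
    (hd : ∀ u ∈ Icc (0:ℝ) 1, ∀ t ∈ Icc (0:ℝ) 1,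
      HasDerivWithinAt (fun r => f r t) (g u t) (Icc 0 1) u)
    (hx : ContinuousOn x (Icc 0 1))
    {s : ℝ} (hs : s ∈ Icc (0:ℝ) 1) :
    HasDerivWithinAt (fun u => ∫ t in u..(1:ℝ), f u t * x t)
      (-(f s s * x s) + ∫ t in s..(1:ℝ), g s t * x t) (Icc 0 1) s := by
  have h0 : (0:ℝ) ∈ Icc (0:ℝ) 1 := ⟨le_refl 0, zero_le_one⟩
  have h1 : (1:ℝ) ∈ Icc (0:ℝ) 1 := ⟨zero_le_one, le_refl 1⟩
  have hC1 := hasDeriv_paramC hf hg hd hx hs h1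
  have hT : HasDerivWithinAt (fun u => ∫ t in (0:ℝ)..1, f u t * x t)
      (∫ t in (0:ℝ)..1, g s t * x t) (Icc 0 1) s := by
    have hadd := (hasDerivWithinAt_const s (Icc (0:ℝ) 1)
      (∫ t in (0:ℝ)..1, f s t * x t)).add hC1
    have heqT : ∀ u ∈ Icc (0:ℝ) 1,
        (∫ t in (0:ℝ)..1, f s t * x t) + (∫ t in (0:ℝ)..1, (f u t - f s t) * x t)
          = ∫ t in (0:ℝ)..1, f u t * x t := by
      intro u hu
      rw [← intervalIntegral.integral_add (ii_of_contOn (h := fun t => f s t * x t) ((slice2 hf hs).mul hx) h0 h1)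
        (ii_of_contOn (h := fun t => (f u t - f s t) * x t) (((slice2 hf hu).sub (slice2 hf hs)).mul hx) h0 h1)]
      exact intervalIntegral.integral_congr fun t _ => by ring
    have := hadd.congr (fun u hu => (heqT u hu).symm) ((heqT s hs).symm)
    simpa using this
  have hKL := key_left hf hg hd hx hs
  have hsub := hT.sub hKL
  have heq : ∀ u ∈ Icc (0:ℝ) 1,
      (∫ t in (0:ℝ)..1, f u t * x t) - (∫ t in (0:ℝ)..u, f u t * x t)
        = ∫ t in u..(1:ℝ), f u t * x t := by
    intro u hu
    rw [← intervalIntegral.integral_add_adjacent_intervals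
      (ii_of_contOn (h := fun t => f u t * x t) ((slice2 hf hu).mul hx) h0 hu)
      (ii_of_contOn (h := fun t => f u t * x t) ((slice2 hf hu).mul hx) hu h1)]
    ring
  have hfin := hsub.congr (fun u hu => (heq u hu).symm) ((heq s hs).symm)
  have hsplit : (∫ t in (0:ℝ)..1, g s t * x t)
      = (∫ t in (0:ℝ)..s, g s t * x t) + ∫ t in s..(1:ℝ), g s t * x t :=
    (intervalIntegral.integral_add_adjacent_intervals
      (ii_of_contOn (h := fun t => g s t * x t) ((slice2 hg hs).mul hx) h0 hs)
      (ii_of_contOn (h := fun t => g s t * x t) ((slice2 hg hs).mul hx) hs h1)).symm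
  refine hfin.congr_deriv ?_
  rw [hsplit]; ring

noncomputable def E1 (κ dκ : ℝ → ℝ → ℝ) (u t : ℝ) : ℝ :=
  if t ≤ u then κ u t else κ t t + (u - t) * dκ t t

noncomputable def E1' (dκ : ℝ → ℝ → ℝ) (u t : ℝ) : ℝ := if t ≤ u then dκ u t else dκ t t

noncomputable def E2 (κ dκ : ℝ → ℝ → ℝ) (u t : ℝ) : ℝ :=
  if u ≤ t then κ u t else κ t t + (u - t) * dκ t t

noncomputable def E2' (dκ : ℝ → ℝ → ℝ) (u t : ℝ) : ℝ := if u ≤ t then dκ u t else dκ t t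

lemma maxMapsTo : MapsTo (fun p : ℝ × ℝ => ((max p.1 p.2, p.2) : ℝ × ℝ))
    (Icc 0 1 ×ˢ Icc 0 1) {p : ℝ × ℝ | 0 ≤ p.2 ∧ p.2 ≤ p.1 ∧ p.1 ≤ 1} :=
  fun p hp => ⟨hp.2.1, le_max_right _ _, max_le hp.1.2 hp.2.2⟩

lemma minMapsTo : MapsTo (fun p : ℝ × ℝ => ((min p.1 p.2, p.2) : ℝ × ℝ))
    (Icc 0 1 ×ˢ Icc 0 1) {p : ℝ × ℝ | 0 ≤ p.1 ∧ p.1 ≤ p.2 ∧ p.2 ≤ 1} :=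
  fun p hp => ⟨le_min hp.1.1 hp.2.1, min_le_right _ _, hp.2.2⟩

lemma E1_cont {κ dκ : ℝ → ℝ → ℝ}
    (hκ : ContinuousOn (fun p : ℝ × ℝ => κ p.1 p.2) {p : ℝ × ℝ | 0 ≤ p.2 ∧ p.2 ≤ p.1 ∧ p.1 ≤ 1})
    (hdκ : ContinuousOn (fun p : ℝ × ℝ => dκ p.1 p.2) {p : ℝ × ℝ | 0 ≤ p.2 ∧ p.2 ≤ p.1 ∧ p.1 ≤ 1}) :
    ContinuousOn (fun p : ℝ × ℝ => E1 κ dκ p.1 p.2) (Icc 0 1 ×ˢ Icc 0 1) := by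
  have hm : ContinuousOn (fun p : ℝ × ℝ => ((max p.1 p.2, p.2) : ℝ × ℝ)) (Icc 0 1 ×ˢ Icc 0 1) :=
    ((continuous_fst.max continuous_snd).prodMk continuous_snd).continuousOn
  have h1 : ContinuousOn (fun p : ℝ × ℝ => κ (max p.1 p.2) p.2) (Icc 0 1 ×ˢ Icc 0 1) :=
    hκ.comp hm maxMapsTo
  have h2 : ContinuousOn (fun p : ℝ × ℝ => dκ (max p.1 p.2) p.2) (Icc 0 1 ×ˢ Icc 0 1) :=
    hdκ.comp hm maxMapsTo
  have hall : ContinuousOn (fun p : ℝ × ℝ =>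
      κ (max p.1 p.2) p.2 + (p.1 - max p.1 p.2) * dκ (max p.1 p.2) p.2)
      (Icc 0 1 ×ˢ Icc 0 1) :=
    h1.add ((continuousOn_fst.sub ((continuous_fst.max continuous_snd).continuousOn)).mul h2)
  refine hall.congr fun p _ => ?_
  by_cases h : p.2 ≤ p.1
  · simp [E1, h, max_eq_left h]
  · push_neg at h
    simp [E1, not_le.mpr h, max_eq_right h.le]

lemma E1'_cont {dκ : ℝ → ℝ → ℝ}
    (hdκ : ContinuousOn (fun p : ℝ × ℝ => dκ p.1 p.2) {p : ℝ × ℝ | 0 ≤ p.2 ∧ p.2 ≤ p.1 ∧ p.1 ≤ 1}) :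
    ContinuousOn (fun p : ℝ × ℝ => E1' dκ p.1 p.2) (Icc 0 1 ×ˢ Icc 0 1) := by
  have hm : ContinuousOn (fun p : ℝ × ℝ => ((max p.1 p.2, p.2) : ℝ × ℝ)) (Icc 0 1 ×ˢ Icc 0 1) :=
    ((continuous_fst.max continuous_snd).prodMk continuous_snd).continuousOn
  refine (hdκ.comp hm maxMapsTo).congr fun p _ => ?_
  by_cases h : p.2 ≤ p.1
  · simp [E1', h, max_eq_left h]
  · push_neg at h
    simp [E1', not_le.mpr h, max_eq_right h.le]

lemma E2_cont {κ dκ : ℝ → ℝ → ℝ}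
    (hκ : ContinuousOn (fun p : ℝ × ℝ => κ p.1 p.2) {p : ℝ × ℝ | 0 ≤ p.1 ∧ p.1 ≤ p.2 ∧ p.2 ≤ 1})
    (hdκ : ContinuousOn (fun p : ℝ × ℝ => dκ p.1 p.2) {p : ℝ × ℝ | 0 ≤ p.1 ∧ p.1 ≤ p.2 ∧ p.2 ≤ 1}) :
    ContinuousOn (fun p : ℝ × ℝ => E2 κ dκ p.1 p.2) (Icc 0 1 ×ˢ Icc 0 1) := by
  have hm : ContinuousOn (fun p : ℝ × ℝ => ((min p.1 p.2, p.2) : ℝ × ℝ)) (Icc 0 1 ×ˢ Icc 0 1) :=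
    ((continuous_fst.min continuous_snd).prodMk continuous_snd).continuousOn
  have h1 : ContinuousOn (fun p : ℝ × ℝ => κ (min p.1 p.2) p.2) (Icc 0 1 ×ˢ Icc 0 1) :=
    hκ.comp hm minMapsTo
  have h2 : ContinuousOn (fun p : ℝ × ℝ => dκ (min p.1 p.2) p.2) (Icc 0 1 ×ˢ Icc 0 1) :=
    hdκ.comp hm minMapsTo
  have hall : ContinuousOn (fun p : ℝ × ℝ =>
      κ (min p.1 p.2) p.2 + (p.1 - min p.1 p.2) * dκ (min p.1 p.2) p.2)
      (Icc 0 1 ×ˢ Icc 0 1) :=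
    h1.add ((continuousOn_fst.sub ((continuous_fst.min continuous_snd).continuousOn)).mul h2)
  refine hall.congr fun p _ => ?_
  by_cases h : p.1 ≤ p.2
  · simp [E2, h, min_eq_left h]
  · push_neg at h
    simp [E2, not_le.mpr h, min_eq_right h.le]

lemma E2'_cont {dκ : ℝ → ℝ → ℝ}
    (hdκ : ContinuousOn (fun p : ℝ × ℝ => dκ p.1 p.2) {p : ℝ × ℝ | 0 ≤ p.1 ∧ p.1 ≤ p.2 ∧ p.2 ≤ 1}) :
    ContinuousOn (fun p : ℝ × ℝ => E2' dκ p.1 p.2) (Icc 0 1 ×ˢ Icc 0 1) := by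
  have hm : ContinuousOn (fun p : ℝ × ℝ => ((min p.1 p.2, p.2) : ℝ × ℝ)) (Icc 0 1 ×ˢ Icc 0 1) :=
    ((continuous_fst.min continuous_snd).prodMk continuous_snd).continuousOn
  refine (hdκ.comp hm minMapsTo).congr fun p _ => ?_
  by_cases h : p.1 ≤ p.2
  · simp [E2', h, min_eq_left h]
  · push_neg at h
    simp [E2', not_le.mpr h, min_eq_right h.le]

lemma E1_deriv {κ dκ : ℝ → ℝ → ℝ}
    (hd : ∀ p : ℝ × ℝ, 0 ≤ p.2 → p.2 ≤ p.1 → p.1 ≤ 1 →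
      HasDerivWithinAt (fun u => κ u p.2) (dκ p.1 p.2) (Icc p.2 1) p.1)
    {u t : ℝ} (hu : u ∈ Icc (0:ℝ) 1) (ht : t ∈ Icc (0:ℝ) 1) :
    HasDerivWithinAt (fun r => E1 κ dκ r t) (E1' dκ u t) (Icc 0 1) u := by
  have haff : ∀ v : ℝ, HasDerivAt (fun r => κ t t + (r - t) * dκ t t) (dκ t t) v := by
    intro v
    simpa using (((hasDerivAt_id v).sub_const t).mul_const (dκ t t)).const_add (κ t t)
  rcases lt_trichotomy t u with h | h | h
  · have base : HasDerivWithinAt (fun r => κ r t) (dκ u t) (Icc t 1) u :=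
      hd (u, t) ht.1 h.le hu.2
    have base2 : HasDerivWithinAt (fun r => E1 κ dκ r t) (dκ u t) (Icc t 1) u :=
      base.congr (fun r hr => by simp [E1, hr.1]) (by simp [E1, h.le])
    have hmem : Icc t 1 ∈ 𝓝[Icc (0:ℝ) 1] u := by
      rw [mem_nhdsWithin]
      exact ⟨Ioi t, isOpen_Ioi, h, fun y hy => ⟨hy.1.le, hy.2.2⟩⟩
    have := base2.mono_of_mem_nhdsWithin hmem
    simpa [E1', h.le] using this
  · subst h
    have right : HasDerivWithinAt (fun r => E1 κ dκ r t) (dκ t t) (Icc t 1) t :=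
      (hd (t, t) ht.1 le_rfl ht.2).congr (fun r hr => by simp [E1, hr.1]) (by simp [E1])
    have left : HasDerivWithinAt (fun r => E1 κ dκ r t) (dκ t t) (Icc 0 t) t := by
      refine (haff t).hasDerivWithinAt.congr (fun r hr => ?_) (by simp [E1])
      by_cases hrt : t ≤ r
      · have hre : r = t := le_antisymm hr.2 hrt
        simp [E1, hre]
      · simp [E1, hrt]
    have := (left.union right).mono (le_of_eq (Icc_union_Icc_eq_Icc ht.1 ht.2).symm)
    simpa [E1'] using this
  · have hev : ∀ᶠ r in 𝓝[Icc (0:ℝ) 1] u, E1 κ dκ r t = κ t t + (r - t) * dκ t t := by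
      have hlt : ∀ᶠ r in 𝓝 u, r < t := eventually_lt_nhds h
      exact (hlt.filter_mono nhdsWithin_le_nhds).mono fun r hr => by
        simp [E1, not_le.mpr hr]
    have := (haff u).hasDerivWithinAt.congr_of_eventuallyEq hev (by simp [E1, not_le.mpr h])
    simpa [E1', not_le.mpr h] using this

lemma E2_deriv {κ dκ : ℝ → ℝ → ℝ}
    (hd : ∀ p : ℝ × ℝ, 0 ≤ p.1 → p.1 ≤ p.2 → p.2 ≤ 1 →
      HasDerivWithinAt (fun u => κ u p.2) (dκ p.1 p.2) (Icc 0 p.2) p.1)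
    {u t : ℝ} (hu : u ∈ Icc (0:ℝ) 1) (ht : t ∈ Icc (0:ℝ) 1) :
    HasDerivWithinAt (fun r => E2 κ dκ r t) (E2' dκ u t) (Icc 0 1) u := by
  have haff : ∀ v : ℝ, HasDerivAt (fun r => κ t t + (r - t) * dκ t t) (dκ t t) v := by
    intro v
    simpa using (((hasDerivAt_id v).sub_const t).mul_const (dκ t t)).const_add (κ t t)
  rcases lt_trichotomy u t with h | h | h
  · have base : HasDerivWithinAt (fun r => κ r t) (dκ u t) (Icc 0 t) u :=
      hd (u, t) hu.1 h.le ht.2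
    have base2 : HasDerivWithinAt (fun r => E2 κ dκ r t) (dκ u t) (Icc 0 t) u :=
      base.congr (fun r hr => by simp [E2, hr.2]) (by simp [E2, h.le])
    have hmem : Icc 0 t ∈ 𝓝[Icc (0:ℝ) 1] u := by
      rw [mem_nhdsWithin]
      exact ⟨Iio t, isOpen_Iio, h, fun y hy => ⟨hy.2.1, hy.1.le⟩⟩
    have := base2.mono_of_mem_nhdsWithin hmem
    simpa [E2', h.le] using this
  · subst h
    have left : HasDerivWithinAt (fun r => E2 κ dκ r u) (dκ u u) (Icc 0 u) u :=
      (hd (u, u) hu.1 le_rfl hu.2).congr (fun r hr => by simp [E2, hr.2]) (by simp [E2])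
    have right : HasDerivWithinAt (fun r => E2 κ dκ r u) (dκ u u) (Icc u 1) u := by
      refine (haff u).hasDerivWithinAt.congr (fun r hr => ?_) (by simp [E2])
      by_cases hrt : r ≤ u
      · have hre : r = u := le_antisymm hrt hr.1
        simp [E2, hre]
      · simp [E2, hrt]
    have := (left.union right).mono (le_of_eq (Icc_union_Icc_eq_Icc hu.1 hu.2).symm)
    simpa [E2'] using this
  · have hev : ∀ᶠ r in 𝓝[Icc (0:ℝ) 1] u, E2 κ dκ r t = κ t t + (r - t) * dκ t t := by
      have hlt : ∀ᶠ r in 𝓝 u, t < r := eventually_gt_nhds h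
      exact (hlt.filter_mono nhdsWithin_le_nhds).mono fun r hr => by
        simp [E2, not_le.mpr hr]
    have := (haff u).hasDerivWithinAt.congr_of_eventuallyEq hev (by simp [E2, not_le.mpr h])
    simpa [E2', not_le.mpr h] using this

end GreenAux

end GreenAuxSection

/-- With `κ₁, κ₂` of class `C²` on the closed triangles `Ω₁, Ω₂`
(formalized via given first and second `s`-partial derivatives `dκᵢ, d2κᵢ` within
the triangles, all continuous there), agreeing on the diagonal, and `x ∈ C[0,1]`,
the function `Kx(s) = ∫₀¹ κ(s,t)x(t)dt` is twice differentiable on `[0,1]` and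
`(Kx)''(s) = (∂κ₁/∂s(s,s) − ∂κ₂/∂s(s,s)) x(s) + ∫₀ˢ ∂²κ₁/∂s²(s,t)x(t)dt
 + ∫ₛ¹ ∂²κ₂/∂s²(s,t)x(t)dt`. -/
theorem green_kernel_second_derivative
    (κ₁ κ₂ dκ₁ dκ₂ d2κ₁ d2κ₂ : ℝ → ℝ → ℝ) (x : ℝ → ℝ)
    (hx : ContinuousOn x (Set.Icc 0 1))
    (hκ₁ : ContinuousOn (fun p : ℝ × ℝ => κ₁ p.1 p.2)
      {p : ℝ × ℝ | 0 ≤ p.2 ∧ p.2 ≤ p.1 ∧ p.1 ≤ 1})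
    (hκ₂ : ContinuousOn (fun p : ℝ × ℝ => κ₂ p.1 p.2)
      {p : ℝ × ℝ | 0 ≤ p.1 ∧ p.1 ≤ p.2 ∧ p.2 ≤ 1})
    (hdκ₁ : ∀ p : ℝ × ℝ, 0 ≤ p.2 → p.2 ≤ p.1 → p.1 ≤ 1 →
      HasDerivWithinAt (fun u => κ₁ u p.2) (dκ₁ p.1 p.2) (Set.Icc p.2 1) p.1)
    (hdκ₂ : ∀ p : ℝ × ℝ, 0 ≤ p.1 → p.1 ≤ p.2 → p.2 ≤ 1 →
      HasDerivWithinAt (fun u => κ₂ u p.2) (dκ₂ p.1 p.2) (Set.Icc 0 p.2) p.1)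
    (hd2κ₁ : ∀ p : ℝ × ℝ, 0 ≤ p.2 → p.2 ≤ p.1 → p.1 ≤ 1 →
      HasDerivWithinAt (fun u => dκ₁ u p.2) (d2κ₁ p.1 p.2) (Set.Icc p.2 1) p.1)
    (hd2κ₂ : ∀ p : ℝ × ℝ, 0 ≤ p.1 → p.1 ≤ p.2 → p.2 ≤ 1 →
      HasDerivWithinAt (fun u => dκ₂ u p.2) (d2κ₂ p.1 p.2) (Set.Icc 0 p.2) p.1)
    (hdκ₁c : ContinuousOn (fun p : ℝ × ℝ => dκ₁ p.1 p.2)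
      {p : ℝ × ℝ | 0 ≤ p.2 ∧ p.2 ≤ p.1 ∧ p.1 ≤ 1})
    (hdκ₂c : ContinuousOn (fun p : ℝ × ℝ => dκ₂ p.1 p.2)
      {p : ℝ × ℝ | 0 ≤ p.1 ∧ p.1 ≤ p.2 ∧ p.2 ≤ 1})
    (hd2κ₁c : ContinuousOn (fun p : ℝ × ℝ => d2κ₁ p.1 p.2)
      {p : ℝ × ℝ | 0 ≤ p.2 ∧ p.2 ≤ p.1 ∧ p.1 ≤ 1})
    (hd2κ₂c : ContinuousOn (fun p : ℝ × ℝ => d2κ₂ p.1 p.2)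
      {p : ℝ × ℝ | 0 ≤ p.1 ∧ p.1 ≤ p.2 ∧ p.2 ≤ 1})
    (hdiag : ∀ u ∈ Set.Icc (0:ℝ) 1, κ₁ u u = κ₂ u u) :
    ∀ s ∈ Set.Icc (0:ℝ) 1,
      HasDerivWithinAt
        (fun u => ∫ t in (0:ℝ)..1, (if t ≤ u then κ₁ u t else κ₂ u t) * x t)
        ((∫ t in (0:ℝ)..s, dκ₁ s t * x t) + ∫ t in s..(1:ℝ), dκ₂ s t * x t)
        (Set.Icc 0 1) s
      ∧
      HasDerivWithinAt
        (fun u => (∫ t in (0:ℝ)..u, dκ₁ u t * x t) + ∫ t in u..(1:ℝ), dκ₂ u t * x t)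
        ((dκ₁ s s - dκ₂ s s) * x s
          + (∫ t in (0:ℝ)..s, d2κ₁ s t * x t) + ∫ t in s..(1:ℝ), d2κ₂ s t * x t)
        (Set.Icc 0 1) s := by
  intro s hs
  have h0 : (0:ℝ) ∈ Set.Icc (0:ℝ) 1 := ⟨le_refl 0, zero_le_one⟩
  have h1 : (1:ℝ) ∈ Set.Icc (0:ℝ) 1 := ⟨zero_le_one, le_refl 1⟩
  constructor
  · -- first derivative
    have HL := GreenAux.key_left (f := GreenAux.E1 κ₁ dκ₁) (g := GreenAux.E1' dκ₁)
      (GreenAux.E1_cont hκ₁ hdκ₁c) (GreenAux.E1'_cont hdκ₁c)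
      (fun u hu t ht => GreenAux.E1_deriv hdκ₁ hu ht) hx hs
    have HR := GreenAux.key_right (f := GreenAux.E2 κ₂ dκ₂) (g := GreenAux.E2' dκ₂)
      (GreenAux.E2_cont hκ₂ hdκ₂c) (GreenAux.E2'_cont hdκ₂c)
      (fun u hu t ht => GreenAux.E2_deriv hdκ₂ hu ht) hx hs
    have H := HL.add HR
    have heq : ∀ u ∈ Set.Icc (0:ℝ) 1,
        (∫ t in (0:ℝ)..u, GreenAux.E1 κ₁ dκ₁ u t * x t)
          + (∫ t in u..(1:ℝ), GreenAux.E2 κ₂ dκ₂ u t * x t)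
        = ∫ t in (0:ℝ)..1, (if t ≤ u then κ₁ u t else κ₂ u t) * x t := by
      intro u hu
      have e1 : Set.EqOn (fun t => (if t ≤ u then κ₁ u t else κ₂ u t) * x t)
          (fun t => GreenAux.E1 κ₁ dκ₁ u t * x t) (Set.uIcc 0 u) := by
        intro t htu
        rw [Set.uIcc_of_le hu.1] at htu
        simp [GreenAux.E1, htu.2]
      have e2 : Set.EqOn (fun t => (if t ≤ u then κ₁ u t else κ₂ u t) * x t)
          (fun t => GreenAux.E2 κ₂ dκ₂ u t * x t) (Set.uIcc u 1) := by
        intro t htu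
        rw [Set.uIcc_of_le hu.2] at htu
        by_cases h : t ≤ u
        · have hte : t = u := le_antisymm h htu.1
          rw [hte]
          simp [GreenAux.E2, hdiag u hu]
        · simp [GreenAux.E2, h, (not_le.1 h).le]
      have i1 : IntervalIntegrable (fun t => GreenAux.E1 κ₁ dκ₁ u t * x t)
          MeasureTheory.volume 0 u :=
        GreenAux.ii_of_contOn
          ((GreenAux.slice2 (GreenAux.E1_cont hκ₁ hdκ₁c) hu).mul hx) h0 hu
      have i2 : IntervalIntegrable (fun t => GreenAux.E2 κ₂ dκ₂ u t * x t)
          MeasureTheory.volume u 1 :=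
        GreenAux.ii_of_contOn
          ((GreenAux.slice2 (GreenAux.E2_cont hκ₂ hdκ₂c) hu).mul hx) hu h1
      have j1 : IntervalIntegrable (fun t => (if t ≤ u then κ₁ u t else κ₂ u t) * x t)
          MeasureTheory.volume 0 u :=
        i1.congr
          (fun t htm => (e1 (Set.uIoc_subset_uIcc htm)).symm)
      have j2 : IntervalIntegrable (fun t => (if t ≤ u then κ₁ u t else κ₂ u t) * x t)
          MeasureTheory.volume u 1 :=
        i2.congr
          (fun t htm => (e2 (Set.uIoc_subset_uIcc htm)).symm)
      rw [← intervalIntegral.integral_congr e1, ← intervalIntegral.integral_congr e2]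
      exact intervalIntegral.integral_add_adjacent_intervals j1 j2
    have H' := H.congr (fun u hu => (heq u hu).symm) ((heq s hs).symm)
    refine H'.congr_deriv ?_
    have v1 : (∫ t in (0:ℝ)..s, dκ₁ s t * x t)
        = ∫ t in (0:ℝ)..s, GreenAux.E1' dκ₁ s t * x t :=
      intervalIntegral.integral_congr fun t ht => by
        rw [Set.uIcc_of_le hs.1] at ht
        simp [GreenAux.E1', ht.2]
    have v2 : (∫ t in s..(1:ℝ), dκ₂ s t * x t)
        = ∫ t in s..(1:ℝ), GreenAux.E2' dκ₂ s t * x t :=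
      intervalIntegral.integral_congr fun t ht => by
        rw [Set.uIcc_of_le hs.2] at ht
        simp [GreenAux.E2', ht.1]
    have d1 : GreenAux.E1 κ₁ dκ₁ s s = κ₁ s s := by simp [GreenAux.E1]
    have d2 : GreenAux.E2 κ₂ dκ₂ s s = κ₂ s s := by simp [GreenAux.E2]
    rw [v1, v2, d1, d2, hdiag s hs]
    ring
  · -- second derivative
    have HL := GreenAux.key_left (f := GreenAux.E1 dκ₁ d2κ₁) (g := GreenAux.E1' d2κ₁)
      (GreenAux.E1_cont hdκ₁c hd2κ₁c) (GreenAux.E1'_cont hd2κ₁c)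
      (fun u hu t ht => GreenAux.E1_deriv hd2κ₁ hu ht) hx hs
    have HR := GreenAux.key_right (f := GreenAux.E2 dκ₂ d2κ₂) (g := GreenAux.E2' d2κ₂)
      (GreenAux.E2_cont hdκ₂c hd2κ₂c) (GreenAux.E2'_cont hd2κ₂c)
      (fun u hu t ht => GreenAux.E2_deriv hd2κ₂ hu ht) hx hs
    have H := HL.add HR
    have heq : ∀ u ∈ Set.Icc (0:ℝ) 1,
        (∫ t in (0:ℝ)..u, GreenAux.E1 dκ₁ d2κ₁ u t * x t)
          + (∫ t in u..(1:ℝ), GreenAux.E2 dκ₂ d2κ₂ u t * x t)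
        = (∫ t in (0:ℝ)..u, dκ₁ u t * x t) + ∫ t in u..(1:ℝ), dκ₂ u t * x t := by
      intro u hu
      have e1 : (∫ t in (0:ℝ)..u, GreenAux.E1 dκ₁ d2κ₁ u t * x t)
          = ∫ t in (0:ℝ)..u, dκ₁ u t * x t :=
        intervalIntegral.integral_congr fun t ht => by
          rw [Set.uIcc_of_le hu.1] at ht
          simp [GreenAux.E1, ht.2]
      have e2 : (∫ t in u..(1:ℝ), GreenAux.E2 dκ₂ d2κ₂ u t * x t)
          = ∫ t in u..(1:ℝ), dκ₂ u t * x t :=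
        intervalIntegral.integral_congr fun t ht => by
          rw [Set.uIcc_of_le hu.2] at ht
          simp [GreenAux.E2, ht.1]
      rw [e1, e2]
    have H' := H.congr (fun u hu => (heq u hu).symm) ((heq s hs).symm)
    refine H'.congr_deriv ?_
    have v1 : (∫ t in (0:ℝ)..s, d2κ₁ s t * x t)
        = ∫ t in (0:ℝ)..s, GreenAux.E1' d2κ₁ s t * x t :=
      intervalIntegral.integral_congr fun t ht => by
        rw [Set.uIcc_of_le hs.1] at ht
        simp [GreenAux.E1', ht.2]
    have v2 : (∫ t in s..(1:ℝ), d2κ₂ s t * x t)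
        = ∫ t in s..(1:ℝ), GreenAux.E2' d2κ₂ s t * x t :=
      intervalIntegral.integral_congr fun t ht => by
        rw [Set.uIcc_of_le hs.2] at ht
        simp [GreenAux.E2', ht.1]
    have d1 : GreenAux.E1 dκ₁ d2κ₁ s s = dκ₁ s s := by simp [GreenAux.E1]
    have d2 : GreenAux.E2 dκ₂ d2κ₂ s s = dκ₂ s s := by simp [GreenAux.E2]
    rw [v1, v2, d1, d2]
    ring
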